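/- Let ε_{1−s} … ε_{−1} ★ ε_1 … ε_{k−s} be a primitive landscape with associated Boolean function f(x) = x_s ⊕ ∏_{i : ε_i ∈ {0,1}} (x_{s+i} ⊕ ε_i ⊕ 1) on F_2^k, and suppose that for each index d_1 with ε_{d_1} ∈ {0, 1} there exists d_2 such that ε_{d_2} and ε_{d_1+d_2} are defined and {ε_{d_2}, ε_{d_1+d_2}} = {0, 1}. Then for every n ≥ k the map F : F_2^n → F_2^n defined by F(x)_i = f(x_{i−s+1}, …, x_{i−s+k}) (indices modulo n) is an involution: F(F(x)) = x for all x ∈ F_2^n. -/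

import Mathlib

/-- The shift-invariant map `F : F_2^n → F_2^n` induced by a local rule
`f : F_2^k → F_2`, namely `F(x)_i = f(x_i, x_{i+1}, …, x_{i+k-1})`
with indices taken modulo `n`. -/
def induced (k n : ℕ) (f : (Fin k → ZMod 2) → ZMod 2) :
    (ZMod n → ZMod 2) → ZMod n → ZMod 2 :=
  fun x i => f fun j => x (i + ((j : ℕ) : ZMod n))

/-- The shift-invariant map induced by `f : F_2^k → F_2` with anchor shifted by `j0`
(0-based), namely `F(x)_i = f(x_{i-j0}, x_{i-j0+1}, …, x_{i-j0+k-1})`, indices mod `n`.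
For a 1-based special index `j` this is `F(x)_i = f(x_{i-j+1}, …, x_{i-j+k})`
with `j0 = j - 1`. -/
def inducedShift (k n : ℕ) (j0 : ℕ) (f : (Fin k → ZMod 2) → ZMod 2) :
    (ZMod n → ZMod 2) → ZMod n → ZMod 2 :=
  fun x i => f fun m => x (i - (j0 : ZMod n) + ((m : ℕ) : ZMod n))

/-- A Boolean function `g` depends on the coordinate `i` if there are two inputs
differing only in coordinate `i` on which `g` takes different values. -/
def BoolDependsOn {k : ℕ} (g : (Fin k → ZMod 2) → ZMod 2) (i : Fin k) : Prop :=
  ∃ x y : Fin k → ZMod 2, (∀ j, j ≠ i → x j = y j) ∧ g x ≠ g y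

/-- The cyclic right shift on `F_2^n`. -/
def shiftR (n : ℕ) : (ZMod n → ZMod 2) → ZMod n → ZMod 2 :=
  fun x i => x (i - 1)

private lemma zmod2_aa : ∀ a : ZMod 2, a + a = 0 := by decide
private lemma zmod2_bb1 : ∀ b : ZMod 2, b + b + 1 = 1 := by decide
private lemma zmod2_bb0 : ∀ b : ZMod 2, b + 1 + b + 1 = 0 := by decide
private lemma zmod2_ne' : ∀ a b : ZMod 2, a ≠ b → a = b + 1 := by decide

section Aux
variable {k n : ℕ} (s0 : Fin k) (ε : Fin k → Option (ZMod 2))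

def PLMatches (x : ZMod n → ZMod 2) (i : ZMod n) : Prop :=
  ∀ p : Fin k, ∀ b : ZMod 2, ε p = some b →
    x (i - ((s0 : ℕ) : ZMod n) + ((p : ℕ) : ZMod n)) = b

def PLQ (x : ZMod n → ZMod 2) (i : ZMod n) : ZMod 2 :=
  ∏ p : Fin k, (ε p).elim 1
    (fun b => x (i - ((s0 : ℕ) : ZMod n) + ((p : ℕ) : ZMod n)) + b + 1)

open Classical in
lemma PLQ_eq (x : ZMod n → ZMod 2) (i : ZMod n) :
    PLQ s0 ε x i = if PLMatches s0 ε x i then 1 else 0 := by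
  by_cases h : PLMatches s0 ε x i
  · rw [if_pos h]
    apply Finset.prod_eq_one
    intro p _
    cases hp : ε p with
    | none => rfl
    | some b => simpa [hp, h p b hp] using zmod2_bb1 b
  · rw [if_neg h]
    simp only [PLMatches, not_forall] at h
    obtain ⟨p, b, hp, hx⟩ := h
    apply Finset.prod_eq_zero (Finset.mem_univ p)
    rw [hp]
    have := zmod2_ne' _ _ hx
    simpa [this] using zmod2_bb0 b

lemma PL_lemA
    (hcond : ∀ p1 : Fin k, (ε p1).isSome →
      ∃ p2 p3 : Fin k, ((p3 : ℕ) : ℤ) = ((p2 : ℕ) : ℤ) + ((p1 : ℕ) : ℤ) - ((s0 : ℕ) : ℤ) ∧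
        ∃ b2 b3 : ZMod 2, ε p2 = some b2 ∧ ε p3 = some b3 ∧ b2 ≠ b3)
    {x : ZMod n → ZMod 2} {i : ZMod n} (hM : PLMatches s0 ε x i)
    {p1 : Fin k} {b1 : ZMod 2} (h1 : ε p1 = some b1) :
    ¬ PLMatches s0 ε x (i - ((s0 : ℕ) : ZMod n) + ((p1 : ℕ) : ZMod n)) := by
  intro hM'
  obtain ⟨p2, p3, heq, b2, b3, h2, h3, hne⟩ := hcond p1 (by rw [h1]; rfl)
  have e3 := hM p3 b3 h3
  have e2 := hM' p2 b2 h2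
  have hc : ((p3 : ℕ) : ZMod n) = ((p2 : ℕ) : ZMod n) + ((p1 : ℕ) : ZMod n)
      - ((s0 : ℕ) : ZMod n) := by
    have := congrArg (Int.cast : ℤ → ZMod n) heq
    push_cast at this
    exact this
  apply hne
  rw [← e2, ← e3, hc]
  ring_nf

lemma PL_matches_iff
    (hcond : ∀ p1 : Fin k, (ε p1).isSome →
      ∃ p2 p3 : Fin k, ((p3 : ℕ) : ℤ) = ((p2 : ℕ) : ℤ) + ((p1 : ℕ) : ℤ) - ((s0 : ℕ) : ℤ) ∧
        ∃ b2 b3 : ZMod 2, ε p2 = some b2 ∧ ε p3 = some b3 ∧ b2 ≠ b3)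
    (x : ZMod n → ZMod 2) (i : ZMod n) :
    PLMatches s0 ε (fun j => x j + PLQ s0 ε x j) i ↔ PLMatches s0 ε x i := by
  classical
  constructor
  · intro hy
    by_contra hx
    simp only [PLMatches, not_forall] at hx
    obtain ⟨p0, b0, hp0, hx0⟩ := hx
    -- position p0 must have been flipped
    have hy0 := hy p0 b0 hp0
    simp only [] at hy0
    have hQ0 : PLMatches s0 ε x (i - ((s0 : ℕ) : ZMod n) + ((p0 : ℕ) : ZMod n)) := by
      by_contra hc
      rw [PLQ_eq, if_neg hc, add_zero] at hy0
      exact hx0 hy0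
    obtain ⟨p2, p3, heq, b2, b3, h2, h3, hne⟩ := hcond p0 (by rw [hp0]; rfl)
    have hc : ((p3 : ℕ) : ZMod n) = ((p2 : ℕ) : ZMod n) + ((p0 : ℕ) : ZMod n)
        - ((s0 : ℕ) : ZMod n) := by
      have := congrArg (Int.cast : ℤ → ZMod n) heq
      push_cast at this
      exact this
    have hpos : i - ((s0 : ℕ) : ZMod n) + ((p3 : ℕ) : ZMod n)
        = (i - ((s0 : ℕ) : ZMod n) + ((p0 : ℕ) : ZMod n)) - ((s0 : ℕ) : ZMod n)
          + ((p2 : ℕ) : ZMod n) := by rw [hc]; ring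
    have e2 : x (i - ((s0 : ℕ) : ZMod n) + ((p3 : ℕ) : ZMod n)) = b2 := by
      rw [hpos]; exact hQ0 p2 b2 h2
    have hy3 := hy p3 b3 h3
    simp only [] at hy3
    have hQ3 : PLMatches s0 ε x (i - ((s0 : ℕ) : ZMod n) + ((p3 : ℕ) : ZMod n)) := by
      by_contra hc3
      rw [PLQ_eq, if_neg hc3, add_zero] at hy3
      exact hne (e2.symm.trans hy3)
    exact (PL_lemA s0 ε hcond hQ0 h2) (by rwa [← hpos])
  · intro hx
    intro p b hp
    have := PL_lemA s0 ε hcond hx hp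
    simp only
    rw [PLQ_eq, if_neg this, add_zero]
    exact hx p b hp

lemma PL_F_apply (x : ZMod n → ZMod 2) (i : ZMod n) :
    inducedShift k n (s0 : ℕ)
      (fun x => x s0 + ∏ p : Fin k, (ε p).elim 1 (fun b => x p + b + 1)) x i
      = x i + PLQ s0 ε x i := by
  show x (i - ((s0 : ℕ) : ZMod n) + ((s0 : ℕ) : ZMod n)) + _ = _
  rw [sub_add_cancel]
  rfl

end Aux


/-- with the same primitive-landscape setup and hypothesis as
Statement 3, for every `n ≥ k` the map
`F(x)_i = f(x_{i-s+1}, …, x_{i-s+k})` (1-based star index `s`; here `s0 = s - 1` so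
the anchor shift is `s0`) is an involution: `F(F(x)) = x` for all `x ∈ F_2^n`. -/
theorem stmt4 (k : ℕ) (hk : 0 < k) (s0 : Fin k)
    (ε : Fin k → Option (ZMod 2))
    (hstar : ε s0 = none)
    (hfirst : (ε ⟨0, hk⟩).isSome) (hlast : (ε ⟨k - 1, by omega⟩).isSome)
    (hcond : ∀ p1 : Fin k, (ε p1).isSome →
      ∃ p2 p3 : Fin k, ((p3 : ℕ) : ℤ) = ((p2 : ℕ) : ℤ) + ((p1 : ℕ) : ℤ) - ((s0 : ℕ) : ℤ) ∧
        ∃ b2 b3 : ZMod 2, ε p2 = some b2 ∧ ε p3 = some b3 ∧ b2 ≠ b3) :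
    ∀ n, k ≤ n → ∀ x : ZMod n → ZMod 2,
      inducedShift k n (s0 : ℕ)
          (fun x => x s0 + ∏ p : Fin k, (ε p).elim 1 (fun b => x p + b + 1))
        (inducedShift k n (s0 : ℕ)
          (fun x => x s0 + ∏ p : Fin k, (ε p).elim 1 (fun b => x p + b + 1)) x) = x := by
  intro n hn x
  funext i
  have hFx : inducedShift k n (s0 : ℕ)
      (fun x => x s0 + ∏ p : Fin k, (ε p).elim 1 (fun b => x p + b + 1)) x
      = fun j => x j + PLQ s0 ε x j := funext fun j => PL_F_apply s0 ε x j
  rw [PL_F_apply, hFx]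
  have hQQ : PLQ s0 ε (fun j => x j + PLQ s0 ε x j) i = PLQ s0 ε x i := by
    classical
    rw [PLQ_eq, PLQ_eq]
    by_cases h : PLMatches s0 ε x i
    · rw [if_pos h, if_pos ((PL_matches_iff s0 ε hcond x i).2 h)]
    · rw [if_neg h, if_neg (fun h' => h ((PL_matches_iff s0 ε hcond x i).1 h'))]
  rw [hQQ, add_assoc, zmod2_aa, add_zero]
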